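/- Define Q_n by Q₀ = 1, Q₁(x) = x, and Q_{n+1}(x) = x Q_n(x) - β_n Q_{n-1}(x), where β_n = n+2 for odd n and β_n = n for even n. Then the Q_n are orthogonal with respect to the measure on ℝ with density f(t) = t² e^{-t²/2}/√(2π): for m ≠ n, ∫_ℝ Q_m(t) Q_n(t) t² e^{-t²/2}/√(2π) dt = 0. -/

import Mathlib

open MeasureTheory Real Polynomial

noncomputable def β (n : ℕ) : ℝ := if Odd n then n + 2 else n

/-- `Q₀ = 1`, `Q₁ = X`, `Q_{n+2} = X * Q_{n+1} - β_{n+1} * Q_n`. -/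
noncomputable def Q : ℕ → Polynomial ℝ
  | 0 => 1
  | 1 => X
  | (n + 2) => X * Q (n + 1) - C (β (n + 1)) * Q n

namespace Stmt10Aux

noncomputable def I (p : ℝ[X]) : ℝ := ∫ t : ℝ, p.eval t * Real.exp (-t ^ 2 / 2)

lemma integrable_poly (p : ℝ[X]) :
    Integrable (fun t : ℝ => p.eval t * Real.exp (-t ^ 2 / 2)) := by
  induction p using Polynomial.induction_on' with
  | add p q hp hq => simp only [Polynomial.eval_add, add_mul]; exact hp.add hq
  | monomial n a =>
      have h := integrable_rpow_mul_exp_neg_mul_sq (b := (1:ℝ)/2) (by norm_num)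
        (s := (n:ℝ)) (lt_of_lt_of_le (by norm_num) (Nat.cast_nonneg n))
      have h2 : Integrable (fun x : ℝ => x ^ n * Real.exp (-x ^ 2 / 2)) := by
        have e : (fun x : ℝ => x ^ n * Real.exp (-x ^ 2 / 2))
            = fun x : ℝ => x ^ (n : ℝ) * Real.exp (-(1/2) * x ^ 2) := by
          funext x
          rw [Real.rpow_natCast, show -(x:ℝ) ^ 2 / 2 = -(1/2) * x ^ 2 by ring]
        rw [e]
        exact h
      simpa [Polynomial.eval_monomial, mul_assoc] using h2.const_mul a

lemma hasDeriv (p : ℝ[X]) (t : ℝ) :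
    HasDerivAt (fun t : ℝ => p.eval t * Real.exp (-t ^ 2 / 2))
      ((derivative p - X * p).eval t * Real.exp (-t ^ 2 / 2)) t := by
  have h1 : HasDerivAt (fun t : ℝ => -t ^ 2 / 2) (-t) t := by
    have := ((hasDerivAt_pow 2 t).neg.div_const 2)
    refine this.congr_deriv ?_
    ring
  have h2 := h1.exp
  have h3 := (p.hasDerivAt t).mul h2
  refine h3.congr_deriv ?_
  simp only [Polynomial.eval_sub, Polynomial.eval_mul, Polynomial.eval_X]
  ring

lemma parts (p : ℝ[X]) : I (X * p) = I (derivative p) := by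
  have h0 : ∫ t : ℝ, (derivative p - X * p).eval t * Real.exp (-t ^ 2 / 2) = 0 :=
    integral_eq_zero_of_hasDerivAt_of_integrable (hasDeriv p) (integrable_poly _)
      (integrable_poly p)
  have h1 : I (derivative p) - I (X * p) = 0 := by
    rw [I, I, ← integral_sub (integrable_poly _) (integrable_poly _)]
    simpa [sub_mul] using h0
  linarith

lemma I_add (p q : ℝ[X]) : I (p + q) = I p + I q := by
  unfold I
  simp only [Polynomial.eval_add, add_mul]
  exact integral_add (integrable_poly p) (integrable_poly q)

lemma I_sub (p q : ℝ[X]) : I (p - q) = I p - I q := by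
  unfold I
  simp only [Polynomial.eval_sub, sub_mul]
  exact integral_sub (integrable_poly p) (integrable_poly q)

noncomputable def H (n : ℕ) : ℝ[X] := (Polynomial.hermite n).map (Int.castRingHom ℝ)

lemma H_zero : H 0 = 1 := by simp [H, Polynomial.hermite_zero]

lemma H_one : H 1 = X := by simp [H, Polynomial.hermite_one]

lemma H_succ (n : ℕ) : H (n + 1) = X * H n - derivative (H n) := by
  unfold H
  rw [Polynomial.hermite_succ]
  simp [Polynomial.derivative_map]

lemma dH : ∀ n : ℕ, derivative (H n) = (n : ℝ[X]) * H (n - 1) := by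
  intro n
  induction n using Nat.strong_induction_on with
  | _ n ih =>
    match n with
    | 0 => simp [H_zero]
    | 1 => simp [H_one, H_zero]
    | (k + 2) =>
      have ih1 := ih (k + 1) (by omega)
      rw [show (k + 1) - 1 = k from by omega] at ih1
      rw [show (k + 2) - 1 = k + 1 from by omega]
      rw [H_succ (k + 1), derivative_sub, derivative_mul, derivative_X, one_mul, ih1,
        derivative_mul]
      simp only [Polynomial.derivative_natCast, zero_mul, zero_add]
      have hHs : H (k + 1) = X * H k - derivative (H k) := H_succ k
      push_cast
      push_cast at hHs
      linear_combination (-(k : ℝ[X]) - 1) * hHs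

lemma XH (n : ℕ) : X * H (n + 1) = H (n + 2) + ((n + 1 : ℕ) : ℝ[X]) * H n := by
  have h := H_succ (n + 1)
  rw [dH (n + 1), show (n + 1) - 1 = n from by omega,
    show n + 1 + 1 = n + 2 from rfl] at h
  linear_combination -h

lemma step (a : ℕ) (p : ℝ[X]) : I (H (a + 1) * p) = I (H a * derivative p) := by
  have hq : H (a + 1) * p
      = (X * (H a * p) - derivative (H a * p)) + H a * derivative p := by
    rw [H_succ, derivative_mul]
    ring
  rw [hq, I_add, I_sub, parts]
  ring

lemma key : ∀ (a : ℕ) (p : ℝ[X]), p.natDegree < a → I (H a * p) = 0 := by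
  intro a
  induction a with
  | zero => intro p hp; exact absurd hp (Nat.not_lt_zero _)
  | succ a ih =>
    intro p hp
    rw [step]
    by_cases hd : derivative p = 0
    · simp [hd, I]
    · refine ih _ ?_
      have h0 : p.natDegree ≠ 0 := by
        intro h0
        exact hd (by rw [p.eq_C_of_natDegree_eq_zero h0]; simp)
      have := Polynomial.natDegree_derivative_lt h0
      omega

lemma Q_natDegree : ∀ n : ℕ, (Q n).natDegree ≤ n := by
  intro n
  induction n using Nat.strong_induction_on with
  | _ n ih =>
    match n with
    | 0 => simp [Q]
    | 1 => simp [Q, Polynomial.natDegree_X_le]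
    | (k + 2) =>
      have h1 := ih (k + 1) (by omega)
      have h0 := ih k (by omega)
      show (X * Q (k + 1) - C (β (k + 1)) * Q k).natDegree ≤ k + 2
      refine le_trans (Polynomial.natDegree_sub_le _ _) (max_le ?_ ?_)
      · refine le_trans (Polynomial.natDegree_mul_le) ?_
        have := Polynomial.natDegree_X_le (R := ℝ)
        omega
      · refine le_trans (Polynomial.natDegree_mul_le) ?_
        have := Polynomial.natDegree_C (a := β (k + 1))
        omega

lemma Cβ_odd (k : ℕ) : C (β (2 * k + 1)) = ((2 * k + 3 : ℕ) : ℝ[X]) := by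
  have : Odd (2 * k + 1) := by rw [Nat.odd_iff]; omega
  rw [β, if_pos this,
    show ((2 * k + 1 : ℕ) : ℝ) + 2 = ((2 * k + 3 : ℕ) : ℝ) from by push_cast; ring,
    Polynomial.C_eq_natCast]

lemma Cβ_even (k : ℕ) : C (β (2 * k + 2)) = ((2 * k + 2 : ℕ) : ℝ[X]) := by
  have : ¬ Odd (2 * k + 2) := by rw [Nat.odd_iff]; omega
  rw [β, if_neg this, Polynomial.C_eq_natCast]

lemma AB : ∀ k : ℕ, (X * Q (2 * k) = H (2 * k + 1)) ∧
    (X ^ 2 * Q (2 * k + 1) = H (2 * k + 3) + ((2 * k + 3 : ℕ) : ℝ[X]) * H (2 * k + 1)) := by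
  intro k
  induction k with
  | zero =>
    constructor
    · show X * Q 0 = H 1
      simp [Q, H_one]
    · show X ^ 2 * Q 1 = H 3 + ((3 : ℕ) : ℝ[X]) * H 1
      have h2 : H 2 = X ^ 2 - 1 := by
        rw [show (2:ℕ) = 1 + 1 from rfl, H_succ, H_one]
        simp only [derivative_X]
        ring
      have h3 : H 3 = X ^ 3 - 3 * X := by
        rw [show (3:ℕ) = 2 + 1 from rfl, H_succ, h2]
        simp only [derivative_sub, derivative_one, derivative_pow, derivative_X,
          Nat.cast_ofNat, map_ofNat, mul_one, pow_one, sub_zero]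
        ring
      show X ^ 2 * X = _
      rw [h3, H_one]
      push_cast
      ring
  | succ k ihk =>
    obtain ⟨hA, hB⟩ := ihk
    have e1 : 2 * (k + 1) = 2 * k + 2 := by ring
    have e2 : 2 * (k + 1) + 1 = 2 * k + 3 := by ring
    have e3 : 2 * (k + 1) + 3 = 2 * k + 5 := by ring
    have hQ2 : Q (2 * k + 2) = X * Q (2 * k + 1) - C (β (2 * k + 1)) * Q (2 * k) := rfl
    have hA' : X * Q (2 * k + 2) = H (2 * k + 3) := by
      rw [hQ2, Cβ_odd]
      linear_combination hB - ((2 * k + 3 : ℕ) : ℝ[X]) * hA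
    constructor
    · rw [e2, e1]
      exact hA'
    · rw [e2, e3]
      have hQ3 : Q (2 * k + 3) = X * Q (2 * k + 2) - C (β (2 * k + 2)) * Q (2 * k + 1) := rfl
      have x1 := XH (2 * k + 2)
      have x2 := XH (2 * k + 3)
      have x3 := XH (2 * k + 1)
      rw [hQ3, Cβ_even]
      rw [show 2 * k + 2 + 1 = 2 * k + 3 from rfl, show 2 * k + 2 + 2 = 2 * k + 4 from rfl] at x1
      rw [show 2 * k + 3 + 1 = 2 * k + 4 from rfl, show 2 * k + 3 + 2 = 2 * k + 5 from rfl] at x2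
      rw [show 2 * k + 1 + 1 = 2 * k + 2 from rfl, show 2 * k + 1 + 2 = 2 * k + 3 from rfl] at x3
      push_cast at x1 x2 x3 hA' hB ⊢
      linear_combination X ^ 2 * hA' - (2 * (k : ℝ[X]) + 2) * hB + X * x1 + x2
        + (2 * (k : ℝ[X]) + 3) * x3

lemma main (m n : ℕ) (h : n < m) : I (X ^ 2 * Q m * Q n) = 0 := by
  have hQn := Q_natDegree n
  rcases Nat.even_or_odd m with ⟨k, hk⟩ | ⟨k, hk⟩
  · obtain rfl : m = 2 * k := by omega
    have hA := (AB k).1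
    have e : X ^ 2 * Q (2 * k) * Q n = H (2 * k + 1) * (X * Q n) := by
      linear_combination (X * Q n) * hA
    rw [e]
    refine key _ _ ?_
    have h1 : (X * Q n).natDegree ≤ 1 + n := by
      refine le_trans Polynomial.natDegree_mul_le ?_
      have := Polynomial.natDegree_X_le (R := ℝ)
      omega
    omega
  · obtain rfl : m = 2 * k + 1 := by omega
    have hB := (AB k).2
    have e : X ^ 2 * Q (2 * k + 1) * Q n
        = H (2 * k + 3) * Q n + H (2 * k + 1) * (((2 * k + 3 : ℕ) : ℝ[X]) * Q n) := by
      linear_combination (Q n) * hB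
    rw [e, I_add]
    rw [key (2 * k + 3) (Q n) (by omega), key (2 * k + 1) _ ?_]
    · ring
    · have h1 : (((2 * k + 3 : ℕ) : ℝ[X]) * Q n).natDegree ≤ n := by
        refine le_trans Polynomial.natDegree_mul_le ?_
        rw [Polynomial.natDegree_natCast]
        omega
      omega

lemma half (m n : ℕ) (hmn : n < m) :
    (∫ t : ℝ, (Q m).eval t * (Q n).eval t *
        (t ^ 2 * Real.exp (-t ^ 2 / 2) / Real.sqrt (2 * π))) = 0 := by
  have hrw : ∀ t : ℝ, (Q m).eval t * (Q n).eval t *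
      (t ^ 2 * Real.exp (-t ^ 2 / 2) / Real.sqrt (2 * π))
      = (Real.sqrt (2 * π))⁻¹ * ((X ^ 2 * Q m * Q n).eval t * Real.exp (-t ^ 2 / 2)) := by
    intro t
    simp only [Polynomial.eval_mul, Polynomial.eval_pow, Polynomial.eval_X]
    ring
  simp_rw [hrw]
  rw [integral_const_mul]
  have := main m n hmn
  rw [I] at this
  rw [this, mul_zero]

end Stmt10Aux

theorem stmt10 (m n : ℕ) (h : m ≠ n) :
    (∫ t : ℝ, (Q m).eval t * (Q n).eval t *
        (t ^ 2 * Real.exp (-t ^ 2 / 2) / Real.sqrt (2 * π))) = 0 := by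
  rcases lt_or_gt_of_ne h with hl | hl
  · have hsym : ∀ t : ℝ, (Q m).eval t * (Q n).eval t *
        (t ^ 2 * Real.exp (-t ^ 2 / 2) / Real.sqrt (2 * π))
        = (Q n).eval t * (Q m).eval t *
        (t ^ 2 * Real.exp (-t ^ 2 / 2) / Real.sqrt (2 * π)) := by
      intro t; ring
    simp_rw [hsym]
    exact Stmt10Aux.half n m hl
  · exact Stmt10Aux.half m n hl
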